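/- arXiv:2403.07572 — 7 statements merged into one kernel-verified Lean document; each statement's English description precedes it below -/
import Mathlib

section
/- Let c_exp > 0 and d > 0 be real constants and let q > d. Define c_lin := d·c_exp and t_c := q/c_lin − 1/c_exp (which is positive). Then the function x : [0,∞) → ℝ defined by x(t) = q − c_lin·t for 0 ≤ t ≤ t_c and x(t) = (q − c_lin·t_c)·exp(−c_exp·(t − t_c)) for t > t_c is differentiable on [0,∞), satisfies x(0) = q, and satisfies the ODE x'(t) = −c_exp·sat_d(x(t)) for every t ≥ 0. -/
/-- The saturation function `sat_d : ℝ → [−d,d]`: identity on `[-d,d]`,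
clipped to `d` above and `-d` below. -/
noncomputable def sat (d x : ℝ) : ℝ := max (-d) (min d x)

/-- the explicit linear-exponential function solves the
saturated scalar ODE `x' = -c_exp · sat_d(x)`, `x(0) = q > d`. -/
theorem stmt0 (cexp d q clin tc : ℝ) (hc : 0 < cexp) (hd : 0 < d) (hq : d < q)
    (hclin : clin = d * cexp) (htc : tc = q / clin - 1 / cexp)
    (x : ℝ → ℝ)
    (hx : ∀ t : ℝ, x t = if t ≤ tc then q - clin * t
      else (q - clin * tc) * Real.exp (-cexp * (t - tc))) :
    0 < tc ∧ x 0 = q ∧ DifferentiableOn ℝ x (Set.Ici 0) ∧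
      ∀ t ≥ (0:ℝ), HasDerivWithinAt x (-cexp * sat d (x t)) (Set.Ici 0) t := by
  have hclin0 : 0 < clin := by rw [hclin]; positivity
  have hxd : q - clin * tc = d := by
    rw [htc, hclin]; field_simp; ring
  have htc0 : 0 < tc := by
    rw [htc, hclin, sub_pos, div_lt_div_iff₀ hc (by positivity)]
    nlinarith
  have hexpderiv : ∀ t : ℝ, HasDerivAt
      (fun s => (q - clin * tc) * Real.exp (-cexp * (s - tc)))
      ((q - clin * tc) * (Real.exp (-cexp * (t - tc)) * (-cexp))) t := by
    intro t
    have h1 : HasDerivAt (fun s : ℝ => -cexp * (s - tc)) (-cexp) t := by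
      simpa using ((hasDerivAt_id t).sub_const tc).const_mul (-cexp)
    have h2 := (Real.hasDerivAt_exp (-cexp * (t - tc))).comp t h1
    simpa [mul_comm] using h2.const_mul (q - clin * tc)
  have hlinderiv : ∀ t : ℝ, HasDerivAt (fun s => q - clin * s) (-clin) t := by
    intro t
    simpa using ((hasDerivAt_id t).const_mul clin).const_sub q
  have hkey : ∀ t : ℝ, HasDerivAt x (-cexp * sat d (x t)) t := by
    intro t
    rcases lt_trichotomy t tc with h | h | h
    · have hx1 : x t = q - clin * t := by rw [hx]; simp [h.le]
      have hdle : d ≤ x t := by rw [hx1]; nlinarith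
      have hsat : sat d (x t) = d := by
        unfold sat
        rw [min_eq_left hdle, max_eq_right (by linarith : -d ≤ d)]
      have heq : x =ᶠ[nhds t] fun s => q - clin * s := by
        filter_upwards [Iio_mem_nhds h] with s hs
        rw [hx]; simp [(Set.mem_Iio.mp hs).le]
      rw [hsat]
      have := (hlinderiv t).congr_of_eventuallyEq heq
      refine this.congr_deriv ?_
      rw [hclin]; ring
    · have hxval : x t = d := by rw [hx, h]; simp [hxd]
      have hsat : sat d (x t) = d := by
        rw [hxval]; unfold sat
        rw [min_self, max_eq_right (by linarith : -d ≤ d)]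
      have hpt : x t = (q - clin * tc) * Real.exp (-cexp * (t - tc)) := by
        rw [hxval, hxd, h, sub_self, mul_zero, Real.exp_zero, mul_one]
      have h1 : HasDerivWithinAt x (-clin) (Set.Iic t) t := by
        apply (hlinderiv t).hasDerivWithinAt.congr
        · intro s hs
          rw [hx, if_pos (le_of_le_of_eq (Set.mem_Iic.mp hs) h)]
        · rw [hx, if_pos h.le]
      have h2 : HasDerivWithinAt x (-clin) (Set.Ici t) t := by
        have ht0 : t - tc = 0 := by rw [h]; ring
        have hd2 : (q - clin * tc) * (Real.exp (-cexp * (t - tc)) * (-cexp)) = -clin := by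
          rw [hxd, ht0, mul_zero, Real.exp_zero, one_mul, hclin]; ring
        rw [← hd2]
        apply (hexpderiv t).hasDerivWithinAt.congr
        · intro s hs
          rcases eq_or_lt_of_le (Set.mem_Ici.mp hs) with h' | h'
          · rw [← h']; exact hpt
          · rw [hx, if_neg (not_le.mpr (h ▸ h'))]
        · exact hpt
      have := h1.union h2
      rw [Set.Iic_union_Ici, hasDerivWithinAt_univ] at this
      rw [hsat]
      refine this.congr_deriv ?_
      rw [hclin]; ring
    · have hx1 : x t = (q - clin * tc) * Real.exp (-cexp * (t - tc)) := by
        rw [hx]; simp [not_le.mpr h]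
      have hxpos : 0 < x t := by
        rw [hx1, hxd]; positivity
      have hxle : x t ≤ d := by
        rw [hx1, hxd]
        nlinarith [Real.exp_le_one_iff.mpr (by nlinarith : -cexp * (t - tc) ≤ 0),
          Real.exp_pos (-cexp * (t - tc))]
      have hsat : sat d (x t) = x t := by
        unfold sat
        rw [min_eq_right hxle, max_eq_right (by linarith : -d ≤ x t)]
      have heq : x =ᶠ[nhds t] fun s => (q - clin * tc) * Real.exp (-cexp * (s - tc)) := by
        filter_upwards [Ioi_mem_nhds h] with s hs
        rw [hx, if_neg (not_le.mpr (Set.mem_Ioi.mp hs))]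
      have := (hexpderiv t).congr_of_eventuallyEq heq
      rw [hsat]
      refine this.congr_deriv ?_
      rw [hx1]; ring
  refine ⟨htc0, ?_, ?_, ?_⟩
  · rw [hx]; simp [htc0.le]
  · exact fun t _ => (hkey t).differentiableAt.differentiableWithinAt
  · exact fun t _ => (hkey t).hasDerivWithinAt
end

section
/- Let c_exp > 0 and r > 0 be real constants, and let g : [0,∞) → ℝ be a continuous nonnegative function with g(0) = q > r such that the upper-right Dini derivative satisfies D⁺g(t) ≤ −c_exp·sat_r(g(t)) for every t ≥ 0. Then for all t ≥ 0 it holds that g(t) ≤ linexp(t; q, c_lin, c_exp, t_c), where c_lin = c_exp·r and t_c = (q − r)/c_lin. -/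
/-- The linear-exponential function `linexp(t; q, c_lin, c_exp, t_c)`. -/
noncomputable def linexp (q clin cexp tc t : ℝ) : ℝ :=
  if t ≤ tc then q - clin * t else (q - clin * tc) * Real.exp (-cexp * (t - tc))

/-- The upper-right Dini derivative `D⁺f(t) = limsup_{h→0⁺} (f(t+h) − f(t))/h`. -/
noncomputable def diniDeriv (f : ℝ → ℝ) (t : ℝ) : ℝ :=
  Filter.limsup (fun h : ℝ => (f (t + h) - f t) / h) (nhdsWithin 0 (Set.Ioi 0))

open Set Filter Topology

lemma sat_of_nonneg {r y : ℝ} (hr : 0 < r) (hy : 0 ≤ y) : sat r y = min r y :=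
  max_eq_right (le_trans (by linarith) (le_min hr.le hy))

/-- At a point where `g` is positive, the Dini hypothesis gives eventual slope control. -/
lemma slope_control (cexp r : ℝ) (hc : 0 < cexp) (hr : 0 < r) (g : ℝ → ℝ)
    (hdini : ∀ t ≥ (0:ℝ), diniDeriv g t ≤ -cexp * sat r (g t))
    {x : ℝ} (hx : 0 ≤ x) (hgx : 0 < g x) {s : ℝ} (hs : -cexp * sat r (g x) < s) :
    ∀ᶠ z in 𝓝[>] x, slope g x z < s := by
  have hsat : sat r (g x) = min r (g x) := sat_of_nonneg hr hgx.le
  have hsatpos : 0 < sat r (g x) := by rw [hsat]; exact lt_min hr hgx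
  have hneg : -cexp * sat r (g x) < 0 := by nlinarith
  have hbd := hdini x hx
  have hmap : Filter.map (fun h : ℝ => x + h) (𝓝[>] (0:ℝ)) = 𝓝[>] x := by
    have := (Homeomorph.addLeft x).isEmbedding.map_nhdsWithin_eq (Set.Ioi (0:ℝ)) 0
    simpa [Set.image_const_add_Ioi] using this
  by_cases hb : Filter.IsBoundedUnder (· ≤ ·) (𝓝[>] (0:ℝ))
      (fun h : ℝ => (g (x + h) - g x) / h)
  · have hev : ∀ᶠ h in 𝓝[>] (0:ℝ), (g (x + h) - g x) / h < s :=
      Filter.eventually_lt_of_limsup_lt (lt_of_le_of_lt hbd hs) hb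
    rw [← hmap, Filter.eventually_map]
    exact hev.mono fun h hh => by rwa [slope_def_field, add_sub_cancel_left]
  · exfalso
    have h0 : diniDeriv g x = 0 := by
      rw [diniDeriv, Filter.limsup_eq]
      have : {a : ℝ | ∀ᶠ n in 𝓝[>] (0:ℝ), (g (x + n) - g x) / n ≤ a} = ∅ := by
        ext a
        simp only [Set.mem_setOf_eq, Set.mem_empty_iff_false, iff_false]
        intro ha
        exact hb ⟨a, by rwa [Filter.eventually_map]⟩
      rw [this, Real.sInf_empty]
    rw [h0] at hbd
    linarith

/-- If `g` is positive on `[z0, z1]`, then `g z1 ≤ g z0`. -/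
lemma no_increase (cexp r : ℝ) (hc : 0 < cexp) (hr : 0 < r) (g : ℝ → ℝ)
    (hgc : ContinuousOn g (Set.Ici 0))
    (hdini : ∀ t ≥ (0:ℝ), diniDeriv g t ≤ -cexp * sat r (g t))
    {z0 z1 : ℝ} (h0 : 0 ≤ z0) (h01 : z0 ≤ z1)
    (hpos : ∀ z ∈ Set.Icc z0 z1, 0 < g z) : g z1 ≤ g z0 := by
  have hsub : Set.Icc z0 z1 ⊆ Set.Ici (0:ℝ) := fun z hz => le_trans h0 hz.1
  have := image_le_of_liminf_slope_right_lt_deriv_boundary'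
    (f := g) (f' := fun z => -cexp * sat r (g z)) (a := z0) (b := z1)
    (B := fun _ => g z0) (B' := fun _ => 0)
    (hgc.mono hsub)
    (fun y hy s hs =>
      (slope_control cexp r hc hr g hdini (le_trans h0 hy.1)
        (hpos y ⟨hy.1, hy.2.le⟩) hs).frequently)
    le_rfl continuousOn_const (fun y _ => (hasDerivWithinAt_const y _ _))
    (fun y hy _ => by
      show -cexp * sat r (g y) < 0
      have hgy : 0 < g y := hpos y ⟨hy.1, hy.2.le⟩
      have : sat r (g y) = min r (g y) := sat_of_nonneg hr hgy.le
      have hsp : 0 < sat r (g y) := by rw [this]; exact lt_min hr hgy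
      nlinarith)
  exact this (Set.right_mem_Icc.2 h01)

/-- The full slope control, also valid at zeros of `g`. -/
lemma slope_control_full (cexp r : ℝ) (hc : 0 < cexp) (hr : 0 < r) (g : ℝ → ℝ)
    (hgc : ContinuousOn g (Set.Ici 0)) (hgnn : ∀ t ≥ (0:ℝ), 0 ≤ g t)
    (hdini : ∀ t ≥ (0:ℝ), diniDeriv g t ≤ -cexp * sat r (g t))
    {x : ℝ} (hx : 0 ≤ x) {s : ℝ} (hs : -cexp * sat r (g x) < s) :
    ∃ᶠ z in 𝓝[>] x, slope g x z < s := by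
  rcases (hgnn x hx).lt_or_eq with hpos | hzero
  · exact (slope_control cexp r hc hr g hdini hx hpos hs).frequently
  · have hgx : g x = 0 := hzero.symm
    have hs0 : 0 < s := by
      have : sat r (g x) = 0 := by rw [hgx, sat_of_nonneg hr le_rfl, min_eq_right hr.le]
      rw [this] at hs; linarith
    by_contra hcon
    rw [Filter.not_frequently] at hcon
    have hcon' : ∀ᶠ z in 𝓝[>] x, s ≤ slope g x z := hcon.mono fun z hz => not_lt.1 hz
    obtain ⟨u, hu, hsubs⟩ := mem_nhdsGT_iff_exists_Ioo_subset.1 hcon'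
    have hxu : x < u := hu
    have hgpos : ∀ z ∈ Set.Ioo x u, 0 < g z := by
      intro z hz
      have hsl : s ≤ (g z - g x) / (z - x) := by
        have := hsubs hz; rwa [Set.mem_setOf_eq, slope_def_field] at this
      have hzx : 0 < z - x := by linarith [hz.1]
      rw [le_div_iff₀ hzx] at hsl
      nlinarith [hgx]
    set z1 := (x + u) / 2 with hz1def
    have hz1 : z1 ∈ Set.Ioo x u := ⟨by simp only [hz1def]; linarith, by simp only [hz1def]; linarith⟩
    have key : ∀ z0 ∈ Set.Ioo x z1, g z1 ≤ g z0 := by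
      intro z0 hz0
      refine no_increase cexp r hc hr g hgc hdini (le_trans hx hz0.1.le) hz0.2.le ?_
      intro z hz
      exact hgpos z ⟨lt_of_lt_of_le hz0.1 hz.1, lt_of_le_of_lt hz.2 hz1.2⟩
    have htend : Filter.Tendsto g (𝓝[>] x) (𝓝 0) := by
      have h1 : Filter.Tendsto g (𝓝[Set.Ici (0:ℝ)] x) (𝓝 (g x)) :=
        (hgc x hx).tendsto
      rw [hgx] at h1
      exact h1.mono_left (nhdsWithin_mono x fun z hz => le_trans hx (le_of_lt hz))
    have hle : g z1 ≤ 0 := by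
      refine ge_of_tendsto htend ?_
      filter_upwards [Ioo_mem_nhdsGT_of_mem ⟨le_rfl, hz1.1⟩] with z0 hz0
      exact key z0 hz0
    have : 0 < g z1 := hgpos z1 hz1
    linarith

/-- a continuous nonnegative function whose Dini derivative is
bounded by the saturated decay `-c_exp · sat_r(g)` is bounded by the
linear-exponential function. -/
theorem stmt1 (cexp r q : ℝ) (hc : 0 < cexp) (hr : 0 < r) (hq : r < q)
    (g : ℝ → ℝ) (hgc : ContinuousOn g (Set.Ici 0))
    (hgnn : ∀ t ≥ (0:ℝ), 0 ≤ g t) (hg0 : g 0 = q)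
    (hdini : ∀ t ≥ (0:ℝ), diniDeriv g t ≤ -cexp * sat r (g t)) :
    ∀ t ≥ (0:ℝ), g t ≤ linexp q (cexp * r) cexp ((q - r) / (cexp * r)) t := by
  intro t ht
  have hclinpos : 0 < cexp * r := mul_pos hc hr
  have hqr : 0 < q - r := by linarith
  -- the ε-perturbed bound
  have main : ∀ ε : ℝ, 0 < ε → ε < cexp * r → ε < cexp →
      g t ≤ (if t ≤ (q - r) / (cexp * r - ε) then q - (cexp * r - ε) * t
             else r * Real.exp (-(cexp - ε) * (t - (q - r) / (cexp * r - ε)))) := by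
    intro ε hε hεc hεe
    set a := cexp * r - ε with ha
    have hapos : 0 < a := by simp only [ha]; linarith
    set tce := (q - r) / a with htce
    have htcepos : 0 < tce := div_pos hqr hapos
    have hatce : a * tce = q - r := by
      rw [htce]; field_simp
    set B : ℝ → ℝ := fun y =>
      if y ≤ tce then q - a * y else r * Real.exp (-(cexp - ε) * (y - tce)) with hBdef
    set E : ℝ → ℝ := fun y => r * Real.exp (-(cexp - ε) * (y - tce)) with hEdef
    have hBE : ∀ y, tce ≤ y → B y = E y := by
      intro y hy
      by_cases hy' : y ≤ tce
      · have : y = tce := le_antisymm hy' hy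
        simp only [hBdef, hEdef, this, if_pos le_rfl, sub_self, mul_zero, Real.exp_zero, mul_one]
        linarith [hatce]
      · simp only [hBdef, hEdef, if_neg hy']
    have hEderiv : ∀ y : ℝ, HasDerivAt E (-(cexp - ε) * E y) y := by
      intro y
      have h1 : HasDerivAt (fun z : ℝ => -(cexp - ε) * (z - tce)) (-(cexp - ε)) y := by
        simpa using ((hasDerivAt_id y).sub_const tce).const_mul (-(cexp - ε))
      have h2 := (h1.exp).const_mul r
      simpa [hEdef, mul_comm, mul_assoc, mul_left_comm] using h2
    have hBcont : Continuous B := by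
      rw [hBdef]
      refine Continuous.if_le ?_ ?_ continuous_id continuous_const ?_
      · fun_prop
      · fun_prop
      · intro y hy
        rw [hy, sub_self, mul_zero, Real.exp_zero, mul_one]
        linarith [hatce]
    set B' : ℝ → ℝ := fun y => if y < tce then -a else -(cexp - ε) * B y with hB'def
    have comp := image_le_of_liminf_slope_right_lt_deriv_boundary'
      (f := g) (f' := fun z => -cexp * sat r (g z)) (a := 0) (b := t)
      (B := B) (B' := B')
      (hgc.mono (fun z hz => hz.1))
      (fun y hy s hs =>
        slope_control_full cexp r hc hr g hgc hgnn hdini hy.1 hs)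
      (by
        have : B 0 = q := by
          simp only [hBdef, if_pos htcepos.le, mul_zero, sub_zero]
        rw [this, hg0])
      hBcont.continuousOn
      (by
        intro y _
        by_cases hy : y < tce
        · have hB'y : B' y = -a := by simp only [hB'def, if_pos hy]
          rw [hB'y]
          have hlin : HasDerivAt (fun z : ℝ => q - a * z) (-a) y := by
            simpa using ((hasDerivAt_id y).const_mul a).const_sub q
          have hev : B =ᶠ[𝓝 y] fun z => q - a * z := by
            filter_upwards [Iio_mem_nhds hy] with z hz
            have hzle : z ≤ tce := le_of_lt (Set.mem_Iio.1 hz)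
            simp only [hBdef, if_pos hzle]
          exact (hlin.congr_of_eventuallyEq hev).hasDerivWithinAt
        · push_neg at hy
          have hB'y : B' y = -(cexp - ε) * B y := by simp only [hB'def, if_neg (not_lt.2 hy)]
          rw [hB'y]
          have hd := (hEderiv y).hasDerivWithinAt (s := Set.Ici y)
          refine HasDerivWithinAt.congr ?_ (fun z hz => hBE z (le_trans hy hz)) (hBE y hy)
          rw [hBE y hy]
          exact hd)
      (by
        intro y hy hgB
        show -cexp * sat r (g y) < B' y
        by_cases hytce : y < tce
        · have hBy : B y = q - a * y := by simp only [hBdef, if_pos hytce.le]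
          have hgyr : r ≤ g y := by
            rw [hgB, hBy]
            have : a * y ≤ a * tce := mul_le_mul_of_nonneg_left hytce.le hapos.le
            linarith [hatce]
          have hsat : sat r (g y) = r := by
            rw [sat_of_nonneg hr (le_trans hr.le hgyr), min_eq_left hgyr]
          have hB'y : B' y = -a := by simp only [hB'def, if_pos hytce]
          rw [hsat, hB'y, ha]
          linarith
        · push_neg at hytce
          have hBy : B y = E y := hBE y hytce
          have hEpos : 0 < E y := by
            simp only [hEdef]
            positivity
          have hEler : E y ≤ r := by
            simp only [hEdef]
            have harg : -(cexp - ε) * (y - tce) ≤ 0 := by nlinarith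
            nlinarith [Real.exp_le_one_iff.2 harg]
          have hgyy : g y = E y := by rw [hgB, hBy]
          have hsat : sat r (g y) = g y := by
            rw [sat_of_nonneg hr (hgnn y hy.1), min_eq_right]
            rw [hgyy]; exact hEler
          have hB'y : B' y = -(cexp - ε) * B y := by
            simp only [hB'def, if_neg (not_lt.2 hytce)]
          rw [hsat, hB'y, hBy, ← hgyy]
          have hgypos : 0 < g y := by rw [hgyy]; exact hEpos
          nlinarith)
    have := comp (Set.right_mem_Icc.2 ht)
    simpa [hBdef, ha, htce] using this
  -- now take the limit ε → 0⁺
  by_cases hts : t ≤ (q - r) / (cexp * r)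
  · -- linear regime
    rw [linexp, if_pos hts]
    refine le_of_forall_pos_le_add ?_
    intro δ hδ
    set ε := min (cexp * r / 2) (min (cexp / 2) (δ / (t + 1))) with hεdef
    have hεpos : 0 < ε :=
      lt_min (by linarith) (lt_min (by linarith) (div_pos hδ (by linarith)))
    have hε1 : ε < cexp * r := lt_of_le_of_lt (min_le_left _ _) (by linarith)
    have hε2 : ε < cexp :=
      lt_of_le_of_lt (le_trans (min_le_right _ _) (min_le_left _ _)) (by linarith)
    have h2 := main ε hεpos hε1 hε2
    have htce' : (q - r) / (cexp * r) ≤ (q - r) / (cexp * r - ε) := by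
      apply div_le_div_of_nonneg_left hqr.le (by linarith) (by linarith)
    rw [if_pos (le_trans hts htce')] at h2
    have hεt : ε * t ≤ δ := by
      have h3 : ε ≤ δ / (t + 1) := le_trans (min_le_right _ _) (min_le_right _ _)
      have h4 : ε * t ≤ (δ / (t + 1)) * t := mul_le_mul_of_nonneg_right h3 ht
      have h5 : (δ / (t + 1)) * t ≤ δ := by
        rw [div_mul_eq_mul_div, div_le_iff₀ (by linarith : (0:ℝ) < t + 1)]
        nlinarith
      linarith
    nlinarith [h2]
  · -- exponential regime
    push_neg at hts
    rw [linexp, if_neg (not_le.2 hts)]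
    have hql : q - cexp * r * ((q - r) / (cexp * r)) = r := by
      field_simp
      ring
    rw [hql]
    set F : ℝ → ℝ := fun ε =>
      r * Real.exp (-(cexp - ε) * (t - (q - r) / (cexp * r - ε))) with hFdef
    have hF0 : F 0 = r * Real.exp (-cexp * (t - (q - r) / (cexp * r))) := by
      simp [hFdef]
    have hFcont : ContinuousAt F 0 := by
      apply ContinuousAt.mul continuousAt_const
      apply Real.continuous_exp.continuousAt.comp
      apply ContinuousAt.mul
      · exact (continuousAt_const.sub continuousAt_id).neg
      · exact continuousAt_const.sub
          (continuousAt_const.div (continuousAt_const.sub continuousAt_id)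
            (by simpa using hclinpos.ne'))
    have htendF : Filter.Tendsto F (𝓝[>] (0:ℝ))
        (𝓝 (r * Real.exp (-cexp * (t - (q - r) / (cexp * r))))) := by
      rw [← hF0]
      exact hFcont.tendsto.mono_left nhdsWithin_le_nhds
    refine ge_of_tendsto htendF ?_
    have htcecont : ContinuousAt (fun ε : ℝ => (q - r) / (cexp * r - ε)) 0 :=
      continuousAt_const.div (continuousAt_const.sub continuousAt_id)
        (by simpa using hclinpos.ne')
    have hevtce : ∀ᶠ ε in 𝓝[>] (0:ℝ), (q - r) / (cexp * r - ε) < t := by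
      have : Filter.Tendsto (fun ε : ℝ => (q - r) / (cexp * r - ε)) (𝓝[>] (0:ℝ))
          (𝓝 ((q - r) / (cexp * r))) := by
        have := htcecont.tendsto
        simp only [sub_zero] at this
        exact this.mono_left nhdsWithin_le_nhds
      exact this.eventually_lt_const hts
    have hevsmall : ∀ᶠ ε in 𝓝[>] (0:ℝ), 0 < ε ∧ ε < cexp * r ∧ ε < cexp := by
      have h1 : ∀ᶠ ε in 𝓝[>] (0:ℝ), ε ∈ Set.Ioo (0:ℝ) (min (cexp * r) cexp) :=
        Ioo_mem_nhdsGT_of_mem ⟨le_rfl, lt_min hclinpos hc⟩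
      filter_upwards [h1] with ε hε
      exact ⟨hε.1, lt_of_lt_of_le hε.2 (min_le_left _ _),
        lt_of_lt_of_le hε.2 (min_le_right _ _)⟩
    filter_upwards [hevtce, hevsmall] with ε h4 h123
    obtain ⟨h1, h2, h3⟩ := h123
    have := main ε h1 h2 h3
    rwa [if_neg (not_le.2 h4)] at this
end

section
/- Let E be a finite-dimensional real vector space equipped with two norms N_G and N_L, with constants k1, k2 > 0 satisfying N_L ≤ k1·N_G and N_G ≤ k2·N_L pointwise; set k := k1·k2. Let φ : [0,∞) × E → E satisfy: (i) nonexpansiveness, N_G(φ(t,x) − φ(t,y)) ≤ N_G(x − y) for all t ≥ 0 and x, y ∈ E; (ii) there are x* ∈ E, c_exp > 0, r > 0 such that for every y with N_G(y − x*) ≤ r and every t ≥ 0, N_L(φ(t,y) − x*) ≤ exp(−c_exp·t)·N_L(y − x*); (iii) x* is an equilibrium, φ(t,x*) = x* for all t ≥ 0. Fix ρ ∈ (0,1) and set t_ρ := ln(k·ρ⁻¹)/c_exp. Then for every x0 with N_G(x0 − x*) > r, it holds that N_G(φ(t_ρ, x0) − x*) ≤ N_G(x0 − x*) − r·(1 −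 ρ). -/
/-- for a flow that is nonexpansive in `N_G` on all of `E` and
exponentially contracting toward the equilibrium `x*` in `N_L` on the
`N_G`-ball of radius `r`, after the ρ-contraction time
`t_ρ = ln(k·ρ⁻¹)/c_exp` the `N_G`-distance to `x*` decreases by at least
`r·(1−ρ)` for initial conditions outside the ball. -/
theorem stmt3 (E : Type*) [AddCommGroup E] [Module ℝ E] [FiniteDimensional ℝ E]
    (NG NL : E → ℝ)
    (hGnn : ∀ x, 0 ≤ NG x) (hGdef : ∀ x, NG x = 0 ↔ x = 0)
    (hGsmul : ∀ (a : ℝ) (x : E), NG (a • x) = |a| * NG x)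
    (hGadd : ∀ x y, NG (x + y) ≤ NG x + NG y)
    (hLnn : ∀ x, 0 ≤ NL x) (hLdef : ∀ x, NL x = 0 ↔ x = 0)
    (hLsmul : ∀ (a : ℝ) (x : E), NL (a • x) = |a| * NL x)
    (hLadd : ∀ x y, NL (x + y) ≤ NL x + NL y)
    (k1 k2 k : ℝ) (hk1 : 0 < k1) (hk2 : 0 < k2) (hk : k = k1 * k2)
    (hLG : ∀ x, NL x ≤ k1 * NG x) (hGL : ∀ x, NG x ≤ k2 * NL x)
    (φ : ℝ → E → E)
    (hnonexp : ∀ t ≥ (0:ℝ), ∀ x y : E, NG (φ t x - φ t y) ≤ NG (x - y))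
    (xs : E) (cexp r : ℝ) (hc : 0 < cexp) (hr : 0 < r)
    (hcontr : ∀ y, NG (y - xs) ≤ r → ∀ t ≥ (0:ℝ),
      NL (φ t y - xs) ≤ Real.exp (-cexp * t) * NL (y - xs))
    (heq : ∀ t ≥ (0:ℝ), φ t xs = xs)
    (ρ tρ : ℝ) (hρ0 : 0 < ρ) (hρ1 : ρ < 1)
    (htρ : tρ = Real.log (k * ρ⁻¹) / cexp) :
    ∀ x0 : E, r < NG (x0 - xs) →
      NG (φ tρ x0 - xs) ≤ NG (x0 - xs) - r * (1 - ρ) := by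
  intro x0 hx0
  set d := NG (x0 - xs) with hd
  have hd0 : 0 < d := lt_trans hr hx0
  -- k ≥ 1
  have hvne : NG (x0 - xs) ≠ 0 := ne_of_gt hd0
  have hk1le : 1 ≤ k := by
    have h1 : NG (x0 - xs) ≤ k2 * NL (x0 - xs) := hGL _
    have h2 : NL (x0 - xs) ≤ k1 * NG (x0 - xs) := hLG _
    have : NG (x0 - xs) ≤ k * NG (x0 - xs) := by
      calc NG (x0 - xs) ≤ k2 * NL (x0 - xs) := h1
        _ ≤ k2 * (k1 * NG (x0 - xs)) := by nlinarith
        _ = k * NG (x0 - xs) := by rw [hk]; ring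
    nlinarith
  have hkρ : 1 ≤ k * ρ⁻¹ := by
    have : (1:ℝ) ≤ ρ⁻¹ := one_le_inv_iff₀.mpr ⟨hρ0, le_of_lt hρ1⟩
    nlinarith
  have hkρ0 : 0 < k * ρ⁻¹ := lt_of_lt_of_le one_pos hkρ
  have htρ0 : 0 ≤ tρ := by
    rw [htρ]
    exact div_nonneg (Real.log_nonneg hkρ) (le_of_lt hc)
  have hexp : Real.exp (-cexp * tρ) = ρ / k := by
    rw [htρ]
    have : -cexp * (Real.log (k * ρ⁻¹) / cexp) = -Real.log (k * ρ⁻¹) := by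
      field_simp
    rw [this, Real.exp_neg, Real.exp_log hkρ0]
    rw [mul_inv, inv_inv]
    ring
  -- y on segment
  set a := r / d with ha
  have ha0 : 0 ≤ a := div_nonneg hr.le hd0.le
  have ha1 : a ≤ 1 := by rw [ha]; exact (div_le_one hd0).mpr hx0.le
  set y := xs + a • (x0 - xs) with hy
  have hyx : y - xs = a • (x0 - xs) := by rw [hy]; abel
  have hNGy : NG (y - xs) = r := by
    rw [hyx, hGsmul, abs_of_nonneg ha0, ha]
    field_simp; exact hd.symm
  have hx0y : x0 - y = (1 - a) • (x0 - xs) := by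
    rw [hy, sub_smul, one_smul]; abel
  have hNGx0y : NG (x0 - y) = d - r := by
    rw [hx0y, hGsmul, abs_of_nonneg (by linarith), ha]
    field_simp; rw [← hd]; ring
  -- main chain
  have h1 : NG (φ tρ x0 - xs) ≤ NG (φ tρ x0 - φ tρ y) + NG (φ tρ y - xs) := by
    have := hGadd (φ tρ x0 - φ tρ y) (φ tρ y - xs)
    simpa using this
  have h2 : NG (φ tρ x0 - φ tρ y) ≤ d - r := by
    rw [← hNGx0y]; exact hnonexp tρ htρ0 x0 y
  have h3 : NG (φ tρ y - xs) ≤ ρ * r := by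
    have hc1 : NL (φ tρ y - xs) ≤ Real.exp (-cexp * tρ) * NL (y - xs) :=
      hcontr y (le_of_eq hNGy) tρ htρ0
    have hNLy : NL (y - xs) ≤ k1 * r := by
      have := hLG (y - xs); rwa [hNGy] at this
    calc NG (φ tρ y - xs) ≤ k2 * NL (φ tρ y - xs) := hGL _
      _ ≤ k2 * (Real.exp (-cexp * tρ) * NL (y - xs)) := by
          have := Real.exp_pos (-cexp * tρ); nlinarith
      _ ≤ k2 * ((ρ / k) * (k1 * r)) := by
          rw [hexp]
          have hρk : 0 ≤ ρ / k := le_of_lt (div_pos hρ0 (by linarith))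
          exact mul_le_mul_of_nonneg_left (mul_le_mul_of_nonneg_left hNLy hρk) hk2.le
      _ = ρ * r := by rw [hk]; field_simp
  linarith
end

section
/- Let E be a finite-dimensional real vector space equipped with two norms N_G and N_L, with constants k1, k2 > 0 satisfying N_L ≤ k1·N_G and N_G ≤ k2·N_L pointwise; set k := k1·k2. Let φ : [0,∞) × E → E satisfy the semiflow property φ(0,x) = x and φ(t+s, x) = φ(t, φ(s,x)) for all t, s ≥ 0, together with: (i) N_G(φ(t,x) − φ(t,y)) ≤ N_G(x − y) for all t ≥ 0 and x, y ∈ E; (ii) there are x* ∈ E with φ(t,x*) = x* for all t, c_exp > 0, and r > 0 such that for every y with N_G(y − x*) ≤ r and every t ≥ 0, N_L(φ(t,y) − x*) ≤ exp(−c_exp·t)·N_L(y − x*). Fix ρ ∈ (0,1), set t_ρ := ln(k·ρ⁻¹)/c_exp, and let x0 satisfy N_G(x0 − x*) > r. Then for every natural number i with i·r·(1−ρ) ≤ N_G(x0 − x*) − r, it holds that N_G(φ(i·t_ρ, x0) − x*) ≤ N_G(x0 − x*) − i·r·(1 − ρ). -/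
/-- iterating the ρ-contraction-time decrement. For a semiflow
that is nonexpansive in `N_G` and exponentially contracting toward the
equilibrium `x*` in `N_L` on the `N_G`-ball of radius `r`, after `i` steps of
duration `t_ρ = ln(k·ρ⁻¹)/c_exp` the `N_G`-distance to `x*` has decreased by
at least `i·r·(1−ρ)`, as long as `i·r·(1−ρ) ≤ N_G(x0−x*) − r`. -/
theorem stmt4 (E : Type*) [AddCommGroup E] [Module ℝ E] [FiniteDimensional ℝ E]
    (NG NL : E → ℝ)
    (hGnn : ∀ x, 0 ≤ NG x) (hGdef : ∀ x, NG x = 0 ↔ x = 0)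
    (hGsmul : ∀ (a : ℝ) (x : E), NG (a • x) = |a| * NG x)
    (hGadd : ∀ x y, NG (x + y) ≤ NG x + NG y)
    (hLnn : ∀ x, 0 ≤ NL x) (hLdef : ∀ x, NL x = 0 ↔ x = 0)
    (hLsmul : ∀ (a : ℝ) (x : E), NL (a • x) = |a| * NL x)
    (hLadd : ∀ x y, NL (x + y) ≤ NL x + NL y)
    (k1 k2 k : ℝ) (hk1 : 0 < k1) (hk2 : 0 < k2) (hk : k = k1 * k2)
    (hLG : ∀ x, NL x ≤ k1 * NG x) (hGL : ∀ x, NG x ≤ k2 * NL x)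
    (φ : ℝ → E → E)
    (hφ0 : ∀ x : E, φ 0 x = x)
    (hφadd : ∀ t ≥ (0:ℝ), ∀ s ≥ (0:ℝ), ∀ x : E, φ (t + s) x = φ t (φ s x))
    (hnonexp : ∀ t ≥ (0:ℝ), ∀ x y : E, NG (φ t x - φ t y) ≤ NG (x - y))
    (xs : E) (cexp r : ℝ) (hc : 0 < cexp) (hr : 0 < r)
    (heq : ∀ t ≥ (0:ℝ), φ t xs = xs)
    (hcontr : ∀ y, NG (y - xs) ≤ r → ∀ t ≥ (0:ℝ),
      NL (φ t y - xs) ≤ Real.exp (-cexp * t) * NL (y - xs))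
    (ρ tρ : ℝ) (hρ0 : 0 < ρ) (hρ1 : ρ < 1)
    (htρ : tρ = Real.log (k * ρ⁻¹) / cexp)
    (x0 : E) (hx0 : r < NG (x0 - xs)) :
    ∀ i : ℕ, (i : ℝ) * r * (1 - ρ) ≤ NG (x0 - xs) - r →
      NG (φ ((i : ℝ) * tρ) x0 - xs) ≤ NG (x0 - xs) - (i : ℝ) * r * (1 - ρ) := by
  -- k ≥ 1
  have hx0pos : 0 < NG (x0 - xs) := lt_trans hr hx0
  have hk_ge1 : (1:ℝ) ≤ k := by
    have h1 := hGL (x0 - xs)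
    have h2 := hLG (x0 - xs)
    nlinarith
  have hkpos : 0 < k := lt_of_lt_of_le one_pos hk_ge1
  have hkρpos : 0 < k * ρ⁻¹ := mul_pos hkpos (inv_pos.mpr hρ0)
  have hkρge1 : (1:ℝ) ≤ k * ρ⁻¹ := by
    have : (1:ℝ) < ρ⁻¹ := (one_lt_inv₀ hρ0).mpr hρ1
    nlinarith
  have htρ0 : 0 ≤ tρ := by
    rw [htρ]
    exact div_nonneg (Real.log_nonneg hkρge1) hc.le
  have hexp : Real.exp (-cexp * tρ) = ρ / k := by
    rw [htρ]
    have : -cexp * (Real.log (k * ρ⁻¹) / cexp) = -Real.log (k * ρ⁻¹) := by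
      field_simp
    rw [this, Real.exp_neg, Real.exp_log hkρpos, mul_inv, inv_inv]
    ring
  -- contraction of NG inside the ball after time tρ
  have hG_contr : ∀ y : E, NG (y - xs) ≤ r → NG (φ tρ y - xs) ≤ ρ * NG (y - xs) := by
    intro y hy
    have h1 := hGL (φ tρ y - xs)
    have h2 := hcontr y hy tρ htρ0
    have h3 := hLG (y - xs)
    have h4 : NL (φ tρ y - xs) ≤ Real.exp (-cexp * tρ) * (k1 * NG (y - xs)) := by
      calc NL (φ tρ y - xs) ≤ Real.exp (-cexp * tρ) * NL (y - xs) := h2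
        _ ≤ Real.exp (-cexp * tρ) * (k1 * NG (y - xs)) := by
            apply mul_le_mul_of_nonneg_left h3 (Real.exp_pos _).le
    have h5 : NG (φ tρ y - xs) ≤ k2 * (Real.exp (-cexp * tρ) * (k1 * NG (y - xs))) := by
      calc NG (φ tρ y - xs) ≤ k2 * NL (φ tρ y - xs) := h1
        _ ≤ k2 * (Real.exp (-cexp * tρ) * (k1 * NG (y - xs))) := by
            apply mul_le_mul_of_nonneg_left h4 hk2.le
    rw [hexp, hk] at h5
    have hne1 : k1 ≠ 0 := hk1.ne'
    have hne2 : k2 ≠ 0 := hk2.ne'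
    calc NG (φ tρ y - xs) ≤ k2 * (ρ / (k1 * k2) * (k1 * NG (y - xs))) := h5
      _ = ρ * NG (y - xs) := by field_simp
  -- one-step decrement outside the ball
  have hstep : ∀ y : E, r ≤ NG (y - xs) →
      NG (φ tρ y - xs) ≤ NG (y - xs) - r * (1 - ρ) := by
    intro y hy
    set a := NG (y - xs) with ha_def
    have ha : 0 < a := lt_of_lt_of_le hr hy
    set z := xs + (r / a) • (y - xs) with hz_def
    have hz_sub : z - xs = (r / a) • (y - xs) := by rw [hz_def]; abel
    have hz1 : NG (z - xs) = r := by
      rw [hz_sub, hGsmul, abs_of_pos (div_pos hr ha), ← ha_def]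
      field_simp
    have hyz : y - z = (1 - r / a) • (y - xs) := by
      rw [hz_def, sub_smul, one_smul]
      abel
    have hz2 : NG (y - z) = a - r := by
      rw [hyz, hGsmul, ← ha_def, abs_of_nonneg, sub_mul, one_mul]
      · field_simp
      · have : r / a ≤ 1 := (div_le_one ha).mpr hy
        linarith
    have htri : NG (φ tρ y - xs) ≤ NG (φ tρ y - φ tρ z) + NG (φ tρ z - xs) := by
      have : φ tρ y - xs = (φ tρ y - φ tρ z) + (φ tρ z - xs) := by abel
      rw [this]; exact hGadd _ _
    have h1 : NG (φ tρ y - φ tρ z) ≤ a - r := by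
      calc NG (φ tρ y - φ tρ z) ≤ NG (y - z) := hnonexp tρ htρ0 y z
        _ = a - r := hz2
    have h2 : NG (φ tρ z - xs) ≤ ρ * r := by
      have := hG_contr z (le_of_eq hz1)
      rw [hz1] at this
      exact this
    nlinarith
  -- induction
  intro i
  induction i with
  | zero =>
      intro _
      simp [hφ0]
  | succ i ih =>
      intro h
      have hrρ : 0 < r * (1 - ρ) := by nlinarith
      have h' : (i : ℝ) * r * (1 - ρ) ≤ NG (x0 - xs) - r := by
        push_cast at h
        nlinarith
      have hy := ih h'
      have hitρ : 0 ≤ (i : ℝ) * tρ := mul_nonneg (Nat.cast_nonneg i) htρ0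
      have hsplit : φ ((↑(i + 1) : ℝ) * tρ) x0 = φ tρ (φ ((i : ℝ) * tρ) x0) := by
        have : ((↑(i + 1) : ℝ)) * tρ = tρ + (i : ℝ) * tρ := by push_cast; ring
        rw [this, hφadd tρ htρ0 ((i : ℝ) * tρ) hitρ x0]
      rw [hsplit]
      set y := φ ((i : ℝ) * tρ) x0 with hy_def
      by_cases hcase : r ≤ NG (y - xs)
      · have := hstep y hcase
        push_cast
        push_cast at hy
        nlinarith
      · push_neg at hcase
        have h2 := hG_contr y hcase.le
        have h3 : ρ * NG (y - xs) ≤ ρ * r := by nlinarith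
        push_cast at h ⊢
        nlinarith
end

section
/- Let E be a finite-dimensional real vector space equipped with two norms N_G and N_L, with constants k1, k2 > 0 satisfying N_L ≤ k1·N_G and N_G ≤ k2·N_L pointwise; set k := k1·k2 (so k ≥ 1). Let φ : [0,∞) × E → E satisfy the semiflow property φ(0,x) = x and φ(t+s,x) = φ(t, φ(s,x)), together with: (i) N_G(φ(t,x) − φ(t,y)) ≤ N_G(x − y) for all t ≥ 0 and x, y ∈ E; (ii) there are x* ∈ E with φ(t,x*) = x* for all t, c_exp > 0, and r > 0 such that for every y with N_G(y − x*) ≤ r and every t ≥ 0, N_L(φ(t,y) − x*) ≤ exp(−c_exp·t)·N_L(y − x*). Let x0 satisfy N_G(x0 − x*) > r and fix ρ ∈ (0,1). Then for every t ≥ 0, N_G(φ(t,x0) − x*) ≤ linexp(t; q, c_lin, c_exp, t_c), where c_lin = c_exp·r·(1−ρ)/ln(k·ρ⁻¹), q = N_G(x0 − x*) + r·(1−ρ)·ln(k)/ln(k·ρ⁻¹), T = ⌈(N_G(x0 − x*) − r)/((1−ρ)·r)⌉, and t_c = T·ln(k·ρ⁻¹)/c_exp + ln(k)/c_exp. -/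
set_option maxHeartbeats 1000000 in
/-- linear-exponential convergence of a semiflow that is
globally weakly contracting (nonexpansive) w.r.t. `N_G` and locally strongly
contracting toward the equilibrium `x*` w.r.t. `N_L` on the `N_G`-ball of
radius `r`, for initial conditions outside the ball. -/
theorem stmt5 (E : Type*) [AddCommGroup E] [Module ℝ E] [FiniteDimensional ℝ E]
    (NG NL : E → ℝ)
    (hGnn : ∀ x, 0 ≤ NG x) (hGdef : ∀ x, NG x = 0 ↔ x = 0)
    (hGsmul : ∀ (a : ℝ) (x : E), NG (a • x) = |a| * NG x)
    (hGadd : ∀ x y, NG (x + y) ≤ NG x + NG y)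
    (hLnn : ∀ x, 0 ≤ NL x) (hLdef : ∀ x, NL x = 0 ↔ x = 0)
    (hLsmul : ∀ (a : ℝ) (x : E), NL (a • x) = |a| * NL x)
    (hLadd : ∀ x y, NL (x + y) ≤ NL x + NL y)
    (k1 k2 k : ℝ) (hk1 : 0 < k1) (hk2 : 0 < k2) (hk : k = k1 * k2)
    (hLG : ∀ x, NL x ≤ k1 * NG x) (hGL : ∀ x, NG x ≤ k2 * NL x)
    (φ : ℝ → E → E)
    (hφ0 : ∀ x : E, φ 0 x = x)
    (hφadd : ∀ t ≥ (0:ℝ), ∀ s ≥ (0:ℝ), ∀ x : E, φ (t + s) x = φ t (φ s x))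
    (hnonexp : ∀ t ≥ (0:ℝ), ∀ x y : E, NG (φ t x - φ t y) ≤ NG (x - y))
    (xs : E) (cexp r : ℝ) (hc : 0 < cexp) (hr : 0 < r)
    (heq : ∀ t ≥ (0:ℝ), φ t xs = xs)
    (hcontr : ∀ y, NG (y - xs) ≤ r → ∀ t ≥ (0:ℝ),
      NL (φ t y - xs) ≤ Real.exp (-cexp * t) * NL (y - xs))
    (x0 : E) (hx0 : r < NG (x0 - xs))
    (ρ : ℝ) (hρ0 : 0 < ρ) (hρ1 : ρ < 1)
    (clin q T tc : ℝ)
    (hclin : clin = cexp * r * (1 - ρ) / Real.log (k * ρ⁻¹))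
    (hq : q = NG (x0 - xs) + r * (1 - ρ) * Real.log k / Real.log (k * ρ⁻¹))
    (hT : T = (⌈(NG (x0 - xs) - r) / ((1 - ρ) * r)⌉ : ℤ))
    (htc : tc = T * Real.log (k * ρ⁻¹) / cexp + Real.log k / cexp) :
    ∀ t ≥ (0:ℝ), NG (φ t x0 - xs) ≤ linexp q clin cexp tc t := by
  have hd0r : r < NG (x0 - xs) := hx0
  set d0 := NG (x0 - xs) with hd0
  have hcne : cexp ≠ 0 := hc.ne'
  have h1ρ : 0 < 1 - ρ := by linarith only [hρ1]
  have hd0pos : 0 < d0 := hr.trans hd0r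
  -- k ≥ 1
  have hkpos : 0 < k := by rw [hk]; positivity
  have hk1' : 1 ≤ k := by
    have h1 : NG (x0 - xs) ≤ k2 * NL (x0 - xs) := hGL _
    have h2 : k2 * NL (x0 - xs) ≤ k2 * (k1 * NG (x0 - xs)) :=
      mul_le_mul_of_nonneg_left (hLG _) hk2.le
    rw [hk]
    nlinarith only [h1, h2, hd0pos, hd0]
  have hlogk : 0 ≤ Real.log k := Real.log_nonneg hk1'
  have hρinvpos : 0 < ρ⁻¹ := inv_pos.mpr hρ0
  have hρinv : (1:ℝ) < ρ⁻¹ := by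
    have h := mul_inv_cancel₀ hρ0.ne'
    nlinarith only [h, hρinvpos, hρ0, hρ1]
  have hkρ : (1:ℝ) < k * ρ⁻¹ := by
    have h := mul_le_mul_of_nonneg_right hk1' hρinvpos.le
    rw [one_mul] at h
    linarith only [h, hρinv]
  set L := Real.log (k * ρ⁻¹) with hLdef2
  have hL : 0 < L := Real.log_pos hkρ
  set τ := L / cexp with hτdef
  have hτ : 0 < τ := div_pos hL hc
  have hcτ : cexp * τ = L := by rw [hτdef]; field_simp
  have hexpτ : k * Real.exp (-cexp * τ) = ρ := by
    have h1 : -cexp * τ = -L := by rw [← hcτ]; ring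
    rw [h1, Real.exp_neg, Real.exp_log (by positivity : (0:ℝ) < k * ρ⁻¹)]
    field_simp
  set V := Real.log ρ⁻¹ with hVdef
  have hV : 0 < V := Real.log_pos hρinv
  have hVk : L = Real.log k + V := by
    rw [hLdef2, hVdef, Real.log_mul hkpos.ne' (by positivity)]
  have hexpV : Real.exp (-V) = ρ := by
    rw [hVdef, Real.log_inv, neg_neg, Real.exp_log hρ0]
  have hclin_pos : 0 < clin := by
    rw [hclin]; exact div_pos (by positivity) hL
  -- monotonicity of the distance
  have h_mono : ∀ t1 t2 : ℝ, 0 ≤ t1 → t1 ≤ t2 →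
      NG (φ t2 x0 - xs) ≤ NG (φ t1 x0 - xs) := by
    intro t1 t2 h1 h12
    have hs : 0 ≤ t2 - t1 := by linarith only [h12]
    have h2 : φ t2 x0 = φ (t2 - t1) (φ t1 x0) := by
      have h := hφadd (t2 - t1) hs t1 h1 x0
      rwa [show t2 - t1 + t1 = t2 from by ring] at h
    calc NG (φ t2 x0 - xs) = NG (φ (t2-t1) (φ t1 x0) - φ (t2-t1) xs) := by
            rw [h2, heq _ hs]
      _ ≤ NG (φ t1 x0 - xs) := hnonexp _ hs _ _
  -- inside-ball exponential bound
  have h_in : ∀ y : E, NG (y - xs) ≤ r → ∀ s, 0 ≤ s →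
      NG (φ s y - xs) ≤ k * Real.exp (-cexp * s) * NG (y - xs) := by
    intro y hy s hs
    have e1 := hGL (φ s y - xs)
    have e2 := hcontr y hy s hs
    have e3 := hLG (y - xs)
    have hexp : 0 < Real.exp (-cexp * s) := Real.exp_pos _
    have e4 : NL (φ s y - xs) ≤ Real.exp (-cexp * s) * (k1 * NG (y - xs)) :=
      e2.trans (mul_le_mul_of_nonneg_left e3 hexp.le)
    calc NG (φ s y - xs) ≤ k2 * NL (φ s y - xs) := e1
      _ ≤ k2 * (Real.exp (-cexp * s) * (k1 * NG (y - xs))) :=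
          mul_le_mul_of_nonneg_left e4 hk2.le
      _ = k * Real.exp (-cexp * s) * NG (y - xs) := by rw [hk]; ring
  -- outside-ball step bound via a point on the segment
  have h_out : ∀ y : E, r ≤ NG (y - xs) → ∀ s, 0 ≤ s →
      NG (φ s y - xs) ≤ (NG (y - xs) - r) + k * Real.exp (-cexp * s) * r := by
    intro y hy s hs
    set d := NG (y - xs) with hd
    have hdpos : 0 < d := lt_of_lt_of_le hr hy
    set y' := xs + (r / d) • (y - xs) with hy'
    have h1 : y' - xs = (r / d) • (y - xs) := by rw [hy']; abel
    have h2 : NG (y' - xs) = r := by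
      rw [h1, hGsmul, abs_of_nonneg (by positivity), ← hd,
        div_mul_cancel₀ _ hdpos.ne']
    have h3 : y - y' = (1 - r / d) • (y - xs) := by
      rw [hy', sub_smul, one_smul]; abel
    have h4 : NG (y - y') = d - r := by
      have hnn : 0 ≤ 1 - r / d := by
        rw [sub_nonneg, div_le_one hdpos]; exact hy
      rw [h3, hGsmul, abs_of_nonneg hnn, ← hd]
      field_simp
    have h5 : φ s y - xs = (φ s y - φ s y') + (φ s y' - xs) := by abel
    calc NG (φ s y - xs) ≤ NG (φ s y - φ s y') + NG (φ s y' - xs) := by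
            rw [h5]; exact hGadd _ _
      _ ≤ NG (y - y') + k * Real.exp (-cexp * s) * NG (y' - xs) :=
            add_le_add (hnonexp s hs y y') (h_in y' h2.le s hs)
      _ = (d - r) + k * Real.exp (-cexp * s) * r := by rw [h2, h4]
  -- integer setup
  set X := (d0 - r) / ((1 - ρ) * r) with hX
  have hXpos : 0 < X := div_pos (by linarith only [hd0r]) (by positivity)
  have hceil_nonneg : (0:ℤ) ≤ ⌈X⌉ := Int.ceil_nonneg hXpos.le
  set N : ℕ := (⌈X⌉).toNat with hN
  have hNZ : ((N:ℤ):ℝ) = ((⌈X⌉:ℤ):ℝ) := by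
    rw [hN, Int.toNat_of_nonneg hceil_nonneg]
  have hTN : T = (N : ℝ) := by rw [hT]; push_cast at hNZ ⊢; rw [hNZ]
  have hlt_of_lt : ∀ n : ℕ, n < N → (n:ℝ) < X := by
    intro n hn
    have h1 : (n:ℤ) < ⌈X⌉ := Int.lt_toNat.mp hn
    exact_mod_cast Int.lt_ceil.mp h1
  have hXle : X ≤ (N:ℝ) := by
    have := Int.le_ceil X
    push_cast at hNZ; rw [← hNZ] at this; exact_mod_cast this
  have hx_mul : X * ((1 - ρ) * r) = d0 - r := div_mul_cancel₀ _ (by positivity)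
  have hdn_of_lt : ∀ n : ℕ, (n:ℝ) < X → r < d0 - (n:ℝ) * ((1 - ρ) * r) := by
    intro n hnX
    have h := mul_lt_mul_of_pos_right hnX (by positivity : (0:ℝ) < (1-ρ)*r)
    rw [hx_mul] at h
    linarith only [h]
  -- main induction: after n steps of length τ the distance dropped by n(1-ρ)r
  have h_ind : ∀ n : ℕ, n ≤ N →
      NG (φ ((n:ℝ) * τ) x0 - xs) ≤ d0 - (n:ℝ) * ((1 - ρ) * r) := by
    intro n
    induction n with
    | zero => intro _; simp [hφ0, ← hd0]
    | succ n ih =>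
      intro hn1
      have hnN : n < N := Nat.lt_of_succ_le hn1
      have hnX : (n:ℝ) < X := hlt_of_lt n hnN
      have hdn : r < d0 - (n:ℝ) * ((1 - ρ) * r) := hdn_of_lt n hnX
      have ihn := ih hnN.le
      have hnτ : (0:ℝ) ≤ (n:ℝ) * τ := by positivity
      have hsplit : φ ((↑(n+1):ℝ) * τ) x0 = φ τ (φ ((n:ℝ) * τ) x0) := by
        have h := hφadd τ hτ.le ((n:ℝ) * τ) hnτ x0
        rw [← h]; congr 1; push_cast; ring
      rw [hsplit]
      set y := φ ((n:ℝ) * τ) x0 with hy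
      rcases le_or_gt r (NG (y - xs)) with hcase | hcase
      · have hb := h_out y hcase τ hτ.le
        rw [hexpτ] at hb
        push_cast
        linarith only [hb, ihn]
      · have hb := h_in y hcase.le τ hτ.le
        rw [hexpτ] at hb
        have h2 : ρ * NG (y - xs) ≤ ρ * r := mul_le_mul_of_nonneg_left hcase.le hρ0.le
        push_cast
        linarith only [hb, h2, hdn]
  -- algebraic identities
  have hτc : tc = (N:ℝ) * τ + Real.log k / cexp := by
    rw [htc, hTN, hτdef]; field_simp
  have hqtc : q - clin * tc = d0 - (N:ℝ) * ((1 - ρ) * r) := by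
    rw [hq, htc, hclin, hTN]
    field_simp
    ring
  have hlin_at : ∀ (n : ℕ) (s : ℝ), q - clin * ((n:ℝ) * τ + s) =
      (d0 - (n:ℝ) * ((1 - ρ) * r)) + clin / cexp * (Real.log k - cexp * s) := by
    intro n s
    rw [hq, hclin, hτdef]
    field_simp
    ring
  have hclc : clin / cexp = r * (1 - ρ) / L := by
    rw [hclin]; field_simp
  -- main statement
  intro t ht
  simp only [linexp]
  split_ifs with hcase_t
  · -- linear regime
    by_cases hA : (N:ℝ) * τ ≤ t
    · have hNτ : (0:ℝ) ≤ (N:ℝ) * τ := by positivity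
      have h1 := h_mono ((N:ℝ) * τ) t hNτ hA
      have h2 := h_ind N le_rfl
      have h3 : clin * t ≤ clin * tc := mul_le_mul_of_nonneg_left hcase_t hclin_pos.le
      linarith only [h1, h2, h3, hqtc]
    · push_neg at hA
      have htτ : 0 ≤ t / τ := div_nonneg ht hτ.le
      have hfl_nonneg : (0:ℤ) ≤ ⌊t/τ⌋ := Int.floor_nonneg.mpr htτ
      set n : ℕ := (⌊t / τ⌋).toNat with hn
      have hnZ : ((n:ℤ):ℝ) = ((⌊t/τ⌋:ℤ):ℝ) := by
        rw [hn, Int.toNat_of_nonneg hfl_nonneg]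
      have hn1 : (n:ℝ) ≤ t / τ := by
        have := Int.floor_le (t/τ)
        push_cast at hnZ; rw [hnZ]; exact this
      have hn2 : t / τ < (n:ℝ) + 1 := by
        have := Int.lt_floor_add_one (t/τ)
        push_cast at hnZ; rw [hnZ]; exact_mod_cast this
      have hnt : (n:ℝ) * τ ≤ t := (le_div_iff₀ hτ).mp hn1
      have hts' : t < ((n:ℝ) + 1) * τ := (div_lt_iff₀ hτ).mp hn2
      have hnN : n < N := by
        by_contra h
        push_neg at h
        have hc1 : (N:ℝ) ≤ (n:ℝ) := by exact_mod_cast h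
        have hc2 : (N:ℝ) * τ ≤ (n:ℝ) * τ := mul_le_mul_of_nonneg_right hc1 hτ.le
        linarith only [hc2, hnt, hA]
      set s := t - (n:ℝ) * τ with hs
      have hs0 : 0 ≤ s := by rw [hs]; linarith only [hnt]
      have hsτ : s < τ := by rw [hs]; linarith only [hts']
      have hnX : (n:ℝ) < X := hlt_of_lt n hnN
      have hdn : r < d0 - (n:ℝ) * ((1 - ρ) * r) := hdn_of_lt n hnX
      have hyb := h_ind n hnN.le
      have hnτ0 : (0:ℝ) ≤ (n:ℝ) * τ := by positivity
      have hmono' := h_mono ((n:ℝ) * τ) t hnτ0 hnt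
      have hsplit : φ t x0 = φ s (φ ((n:ℝ) * τ) x0) := by
        have h := hφadd s hs0 ((n:ℝ) * τ) hnτ0 x0
        rw [← h]; congr 1; rw [hs]; ring
      have hb : NG (φ t x0 - xs) ≤
          (d0 - (n:ℝ) * ((1 - ρ) * r)) - r + k * Real.exp (-cexp * s) * r := by
        rw [hsplit]
        set y := φ ((n:ℝ) * τ) x0 with hy
        rcases le_or_gt r (NG (y - xs)) with hcs | hcs
        · have h1 := h_out y hcs s hs0
          linarith only [h1, hyb]
        · have h1 := h_in y hcs.le s hs0
          have hke : (0:ℝ) ≤ k * Real.exp (-cexp * s) := by positivity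
          have hm : k * Real.exp (-cexp * s) * NG (y - xs) ≤
              k * Real.exp (-cexp * s) * r := mul_le_mul_of_nonneg_left hcs.le hke
          linarith only [h1, hm, hdn]
      have hqt : q - clin * t =
          (d0 - (n:ℝ) * ((1 - ρ) * r)) + clin / cexp * (Real.log k - cexp * s) := by
        rw [show t = (n:ℝ) * τ + s from by rw [hs]; ring]
        exact hlin_at n s
      rcases le_or_gt (cexp * s) (Real.log k) with hcs2 | hcs2
      · have h6 : 0 ≤ clin / cexp * (Real.log k - cexp * s) := by
          have h7 := hclin_pos.le
          have h8 : 0 ≤ Real.log k - cexp * s := by linarith only [hcs2]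
          positivity
        rw [hqt]
        linarith only [hyb, hmono', h6]
      · set u := cexp * s - Real.log k with hu
        have hu0 : 0 < u := by rw [hu]; linarith only [hcs2]
        have huV : u < V := by
          have h7 : cexp * s < cexp * τ := mul_lt_mul_of_pos_left hsτ hc
          rw [hcτ, hVk] at h7
          rw [hu]; linarith only [h7]
        have hkexp : k * Real.exp (-cexp * s) = Real.exp (-u) := by
          rw [show -u = Real.log k + -(cexp * s) from by rw [hu]; ring,
            Real.exp_add, Real.exp_log hkpos]
          ring_nf
        have huV1 : u / V ≤ 1 := (div_le_one hV).mpr huV.le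
        have hconv := convexOn_exp.2 (Set.mem_univ (0:ℝ)) (Set.mem_univ (-V))
          (by linarith only [huV1] : (0:ℝ) ≤ 1 - u/V)
          (by positivity : (0:ℝ) ≤ u/V) (by ring : 1 - u/V + u/V = 1)
        simp only [smul_eq_mul, mul_zero, zero_add, Real.exp_zero, mul_one] at hconv
        rw [show u / V * -V = -u from by field_simp, hexpV] at hconv
        -- hconv : Real.exp (-u) ≤ 1 - u/V + u/V * ρ
        have hLV : V ≤ L := by rw [hVk]; linarith only [hlogk]
        have hkey : clin / cexp * u ≤ r * (1 - Real.exp (-u)) := by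
          rw [hclc]
          have h8 : (1 - ρ) * (u / V) ≤ 1 - Real.exp (-u) := by
            linarith only [hconv]
          have h9 : r * (1 - ρ) / L * u ≤ r * (1 - ρ) / V * u := by gcongr
          have h10 : r * (1 - ρ) / V * u = r * ((1 - ρ) * (u / V)) := by
            field_simp
          have h11 : r * ((1 - ρ) * (u / V)) ≤ r * (1 - Real.exp (-u)) :=
            mul_le_mul_of_nonneg_left h8 hr.le
          linarith only [h9, h10, h11]
        rw [hqt, show Real.log k - cexp * s = -u from by rw [hu]; ring]
        rw [hkexp] at hb
        linarith only [hb, hkey]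
  · -- exponential regime
    push_neg at hcase_t
    have hlogc : 0 ≤ Real.log k / cexp := div_nonneg hlogk hc.le
    have htN : (N:ℝ) * τ ≤ t := by
      rw [hτc] at hcase_t; linarith only [hcase_t, hlogc]
    have hyN := h_ind N le_rfl
    have hDr : NG (φ ((N:ℝ) * τ) x0 - xs) ≤ r := by
      have h := mul_le_mul_of_nonneg_right hXle (by positivity : (0:ℝ) ≤ (1-ρ)*r)
      rw [hx_mul] at h
      linarith only [h, hyN]
    set s := t - (N:ℝ) * τ with hsdef
    have hs0 : 0 ≤ s := by rw [hsdef]; linarith only [htN]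
    have hNτ0 : (0:ℝ) ≤ (N:ℝ) * τ := by positivity
    have hsplit : φ t x0 = φ s (φ ((N:ℝ) * τ) x0) := by
      have h := hφadd s hs0 ((N:ℝ) * τ) hNτ0 x0
      rw [← h]; congr 1; rw [hsdef]; ring
    have hbd := h_in _ hDr s hs0
    rw [← hsplit] at hbd
    have hkey : k * Real.exp (-cexp * s) = Real.exp (-cexp * (t - tc)) := by
      rw [show -cexp * (t - tc) = Real.log k + -(cexp * s) from by
        rw [hτc, hsdef]; field_simp; ring]
      rw [Real.exp_add, Real.exp_log hkpos]
      ring_nf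
    have hke0 : (0:ℝ) ≤ k * Real.exp (-cexp * s) := by positivity
    calc NG (φ t x0 - xs) ≤ k * Real.exp (-cexp * s) * NG (φ ((N:ℝ)*τ) x0 - xs) := hbd
      _ ≤ k * Real.exp (-cexp * s) * (d0 - (N:ℝ) * ((1 - ρ) * r)) :=
          mul_le_mul_of_nonneg_left hyN hke0
      _ = (q - clin * tc) * Real.exp (-cexp * (t - tc)) := by
          rw [hqtc, ← hkey]; ring
end

section
/- Let c_exp > 0 and d > 0 be real constants, let u : [0,∞) → ℝ be a continuous function, and let u_max ≥ 0 satisfy |u(t)| ≤ u_max < d·c_exp for all t ≥ 0. Let x : [0,∞) → ℝ be differentiable with x(0) = q > d and x'(t) = −c_exp·sat_d(x(t)) + u(t) for all t ≥ 0. Set c_lin := d·c_exp − u_max > 0 and t_c := (q − d)/c_lin > 0. Then for every t ≥ 0, x(t) ≤ linexp(t; q, c_lin, c_exp, t_c) + 1_{[t_c,∞)}(t)·(1 − exp(−c_exp·(t − t_c)))·u_max/c_exp. -/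
lemma sat_mono (d : ℝ) {a b : ℝ} (h : a ≤ b) : sat d a ≤ sat d b :=
  max_le_max le_rfl (min_le_min le_rfl h)

lemma sat_of_ge {d x : ℝ} (hd : 0 ≤ d) (h : d ≤ x) : sat d x = d := by
  unfold sat
  rw [min_eq_left h, max_eq_right (by linarith)]

lemma sat_of_mem {d x : ℝ} (h1 : -d ≤ x) (h2 : x ≤ d) : sat d x = x := by
  unfold sat
  rw [min_eq_right h2, max_eq_right h1]

/-- solutions of the saturated scalar ODE with bounded additive
input `x' = -c_exp·sat_d(x) + u(t)`, `x(0) = q > d`, are bounded by a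
linear-exponential function plus an input-dependent term active after the
crossing time. -/
theorem stmt6 (cexp d q umax clin tc : ℝ) (hc : 0 < cexp) (hd : 0 < d) (hq : d < q)
    (humax0 : 0 ≤ umax) (humax : umax < d * cexp)
    (hclin : clin = d * cexp - umax) (htc : tc = (q - d) / clin)
    (u : ℝ → ℝ) (hu : ContinuousOn u (Set.Ici 0))
    (hub : ∀ t ≥ (0:ℝ), |u t| ≤ umax)
    (x : ℝ → ℝ) (hx0 : x 0 = q)
    (hx : ∀ t ≥ (0:ℝ), HasDerivWithinAt x (-cexp * sat d (x t) + u t) (Set.Ici 0) t) :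
    ∀ t ≥ (0:ℝ), x t ≤ linexp q clin cexp tc t +
      Set.indicator (Set.Ici tc)
        (fun s => (1 - Real.exp (-cexp * (s - tc))) * umax / cexp) t := by
  intro t ht
  have hclin0 : 0 < clin := by rw [hclin]; linarith
  have hcne : cexp ≠ 0 := ne_of_gt hc
  have htc0 : 0 < tc := by rw [htc]; exact div_pos (by linarith) hclin0
  have hqd : q - clin * tc = d := by
    rw [htc]
    field_simp
    ring
  have hum : umax / cexp < d := (div_lt_iff₀ hc).mpr (by linarith)
  have humn : 0 ≤ umax / cexp := div_nonneg humax0 hc.le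
  set G : ℝ → ℝ := fun s => if s ≤ tc then q - clin * s
      else umax / cexp + (d - umax / cexp) * Real.exp (-cexp * (s - tc)) with hGdef
  have hGle : ∀ s, tc ≤ s →
      G s = umax / cexp + (d - umax / cexp) * Real.exp (-cexp * (s - tc)) := by
    intro s hs
    by_cases h : s ≤ tc
    · have hstc : s = tc := le_antisymm h hs
      subst hstc
      simp only [hGdef, if_pos le_rfl, sub_self, mul_zero, Real.exp_zero, mul_one]
      linarith [hqd]
    · simp only [hGdef, if_neg h]
  -- derivative of G from the right everywhere
  have hG' : ∀ r : ℝ, HasDerivWithinAt G (-cexp * sat d (G r) + umax) (Set.Ici r) r := by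
    intro r
    rcases lt_or_ge r tc with hr | hr
    · have hGr : G r = q - clin * r := by simp only [hGdef, if_pos hr.le]
      have hsat : sat d (G r) = d := by
        apply sat_of_ge hd.le
        rw [hGr]
        nlinarith
      have hL : HasDerivAt (fun s : ℝ => q - clin * s) (-clin) r := by
        simpa using ((hasDerivAt_id r).const_mul clin).const_sub q
      have heq : (fun s : ℝ => q - clin * s) =ᶠ[nhds r] G := by
        filter_upwards [Iio_mem_nhds hr] with s hs
        simp only [hGdef, if_pos (le_of_lt (Set.mem_Iio.mp hs))]
      have hval : -cexp * sat d (G r) + umax = -clin := by rw [hsat, hclin]; ring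
      rw [hval]
      exact (hL.congr_of_eventuallyEq heq.symm).hasDerivWithinAt
    · set e : ℝ := Real.exp (-cexp * (r - tc)) with he
      have he0 : 0 < e := Real.exp_pos _
      have he1 : e ≤ 1 := Real.exp_le_one_iff.mpr (by nlinarith)
      have hGr : G r = umax / cexp + (d - umax / cexp) * e := hGle r hr
      have hEderiv : HasDerivAt
          (fun s : ℝ => umax / cexp + (d - umax / cexp) * Real.exp (-cexp * (s - tc)))
          ((d - umax / cexp) * (e * -cexp)) r := by
        have hin : HasDerivAt (fun s : ℝ => -cexp * (s - tc)) (-cexp) r := by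
          simpa using ((hasDerivAt_id r).sub_const tc).const_mul (-cexp)
        exact ((hin.exp.const_mul (d - umax / cexp)).const_add (umax / cexp))
      have hsat : sat d (G r) = G r := by
        apply sat_of_mem
        · rw [hGr]; nlinarith
        · rw [hGr]; nlinarith
      have hval : -cexp * sat d (G r) + umax = (d - umax / cexp) * (e * -cexp) := by
        rw [hsat, hGr]
        field_simp
        ring
      rw [hval]
      exact (hEderiv.hasDerivWithinAt).congr (fun y hy => hGle y (le_trans hr hy)) hGr
  have hGc : Continuous G := by
    rw [hGdef]
    apply Continuous.if_le
    · exact (continuous_const.sub (continuous_const.mul continuous_id))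
    · exact continuous_const.add (continuous_const.mul
        (Real.continuous_exp.comp (continuous_const.mul
          (continuous_id.sub continuous_const))))
    · exact continuous_id
    · exact continuous_const
    · intro s hs
      subst hs
      simp only [sub_self, mul_zero, Real.exp_zero, mul_one]
      linarith [hqd]
  -- key comparison with ε-perturbation
  have key : ∀ ε > (0:ℝ), x t ≤ G t + ε * (t + 1) := by
    intro ε hε
    have main := image_le_of_deriv_right_lt_deriv_boundary'
      (f := x) (f' := fun r => -cexp * sat d (x r) + u r)
      (B := fun s => G s + ε * (s + 1))
      (B' := fun s => -cexp * sat d (G s) + umax + ε) (a := 0) (b := t)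
      (fun r hr => ((hx r hr.1).continuousWithinAt).mono Set.Icc_subset_Ici_self)
      (fun r hr => (hx r hr.1).mono (Set.Ici_subset_Ici.mpr hr.1))
      (by
        rw [hx0]
        show q ≤ G 0 + ε * (0 + 1)
        have hG0 : G 0 = q := by simp [hGdef, if_pos htc0.le]
        rw [hG0]; nlinarith)
      ((hGc.add (continuous_const.mul (continuous_id.add continuous_const))).continuousOn)
      (fun s hs => by
        have hlin : HasDerivAt (fun s : ℝ => ε * (s + 1)) ε s := by
          simpa using ((hasDerivAt_id s).add_const (1:ℝ)).const_mul ε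
        exact (hG' s).add hlin.hasDerivWithinAt)
      (fun r hr heq => by
        have h1 : u r ≤ umax := le_trans (le_abs_self _) (hub r hr.1)
        have h2 : G r ≤ x r := by nlinarith [hr.1]
        have h3 : sat d (G r) ≤ sat d (x r) := sat_mono d h2
        have h4 : cexp * sat d (G r) ≤ cexp * sat d (x r) :=
          mul_le_mul_of_nonneg_left h3 hc.le
        linarith)
    exact main (Set.right_mem_Icc.mpr ht)
  have hxG : x t ≤ G t := by
    by_contra hcon
    push_neg at hcon
    have hpos : (0:ℝ) < t + 1 := by linarith
    have hδ : (0:ℝ) < (x t - G t) / (2 * (t + 1)) := by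
      apply div_pos (by linarith) (by linarith)
    have h := key _ hδ
    have : (x t - G t) / (2 * (t + 1)) * (t + 1) = (x t - G t) / 2 := by
      field_simp
    rw [this] at h
    linarith
  refine le_trans hxG (le_of_eq ?_)
  rcases lt_or_ge t tc with h | h
  · rw [Set.indicator_of_notMem (by simpa using not_le.mpr h)]
    simp only [hGdef, linexp, if_pos h.le, add_zero]
  · rw [Set.indicator_of_mem (Set.mem_Ici.mpr h), hGle t h]
    unfold linexp
    by_cases h2 : t ≤ tc
    · have hrt : t = tc := le_antisymm h2 h
      subst hrt
      simp only [if_pos le_rfl, sub_self, mul_zero, Real.exp_zero, mul_one]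
      field_simp
      rw [hqd]; ring
    · rw [if_neg h2, hqd]
      field_simp
      ring
end

section
/- Let n, m be positive integers, A an m × n real matrix, γ > 0 a real number, and G an m × m real symmetric matrix such that G and I_m − G are both positive semidefinite. Let M be the (n+m) × (n+m) block matrix M = [[−γ⁻¹·AᵀGA, −AᵀG], [GA, γ·(G − I_m)]]. Then the matrix −(M + Mᵀ) is positive semidefinite; equivalently, xᵀMx ≤ 0 for every x ∈ ℝ^{n+m}. -/
open Matrix

lemma psd_smul {k : ℕ} {c : ℝ} (hc : 0 ≤ c) {P : Matrix (Fin k) (Fin k) ℝ}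
    (hP : P.PosSemidef) : (c • P).PosSemidef := by
  refine posSemidef_iff_dotProduct_mulVec.mpr ⟨?_, fun x => ?_⟩
  · unfold Matrix.IsHermitian
    rw [conjTranspose_smul, hP.1.eq]
    simp
  · rw [smul_mulVec, dotProduct_smul, smul_eq_mul]
    exact mul_nonneg hc (hP.dotProduct_mulVec_nonneg x)

lemma psd_blocks {a b : ℕ} {P : Matrix (Fin a) (Fin a) ℝ} {Q : Matrix (Fin b) (Fin b) ℝ}
    (hP : P.PosSemidef) (hQ : Q.PosSemidef) :
    (fromBlocks P 0 0 Q).PosSemidef := by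
  refine posSemidef_iff_dotProduct_mulVec.mpr ⟨?_, fun x => ?_⟩
  · rw [Matrix.isHermitian_fromBlocks_iff]
    exact ⟨hP.1, by simp, by simp, hQ.1⟩
  · have hx : x = Sum.elim (x ∘ Sum.inl) (x ∘ Sum.inr) := (Sum.elim_comp_inl_inr x).symm
    rw [hx, fromBlocks_mulVec]
    simp only [zero_mulVec, add_zero, zero_add, star_trivial, Sum.elim_comp_inl,
      Sum.elim_comp_inr]
    rw [sumElim_dotProduct_sumElim]
    have h1 := hP.dotProduct_mulVec_nonneg (x ∘ Sum.inl)
    have h2 := hQ.dotProduct_mulVec_nonneg (x ∘ Sum.inr)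
    simp only [star_trivial] at h1 h2
    linarith

/-- the Jacobian block matrix of the augmented primal-dual
dynamics for a linear program has `μ₂(M) ≤ 0`: `-(M + Mᵀ)` is positive
semidefinite, equivalently `xᵀMx ≤ 0` for all `x`. -/
theorem stmt11 (n m : ℕ) (hn : 0 < n) (hm : 0 < m)
    (A : Matrix (Fin m) (Fin n) ℝ) (γ : ℝ) (hγ : 0 < γ)
    (G : Matrix (Fin m) (Fin m) ℝ) (hGsymm : G.IsSymm)
    (hG : G.PosSemidef)
    (hIG : ((1 : Matrix (Fin m) (Fin m) ℝ) - G).PosSemidef)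
    (M : Matrix (Fin n ⊕ Fin m) (Fin n ⊕ Fin m) ℝ)
    (hM : M = Matrix.fromBlocks
      (-(γ⁻¹ • (Aᵀ * G * A))) (-(Aᵀ * G)) (G * A) (γ • (G - 1))) :
    (-(M + Mᵀ)).PosSemidef ∧ ∀ x : Fin n ⊕ Fin m → ℝ, x ⬝ᵥ M.mulVec x ≤ 0 := by
  have hGT : Gᵀ = G := hGsymm
  have hN : -(M + Mᵀ) = fromBlocks ((2*γ⁻¹) • (Aᵀ * G * A)) 0 0 ((2*γ) • (1 - G)) := by
    rw [hM, fromBlocks_transpose, fromBlocks_add, fromBlocks_neg]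
    rw [Matrix.fromBlocks_inj]
    simp only [transpose_neg, transpose_smul, transpose_mul, transpose_transpose,
      transpose_sub, transpose_one, hGT, Matrix.mul_assoc]
    refine ⟨by module, by abel, by abel, by module⟩
  have hPSD : (-(M + Mᵀ)).PosSemidef := by
    rw [hN]
    apply psd_blocks
    · apply psd_smul (by positivity)
      have := hG.conjTranspose_mul_mul_same A
      simpa using this
    · apply psd_smul (by positivity)
      exact hIG
  refine ⟨hPSD, fun x => ?_⟩
  have h := hPSD.dotProduct_mulVec_nonneg x
  simp only [star_trivial, neg_mulVec, dotProduct_neg, add_mulVec] at h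
  have hT : x ⬝ᵥ Mᵀ.mulVec x = x ⬝ᵥ M.mulVec x := by
    rw [mulVec_transpose, dotProduct_comm, dotProduct_mulVec]
  rw [dotProduct_add, hT] at h
  linarith
end
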